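/- arXiv:2006.16909 — 10 statements merged into one kernel-verified Lean document; each statement's English description precedes it below -/
import Mathlib

section
/- Let (G,σ) be a best match graph explained by a leaf-colored tree (T,σ). Then none of the forbidden triples of (G,σ) is displayed by (T,σ). -/
/-- A rooted (phylogenetic) tree on leaf set `V`, encoded by its hierarchy of
clusters `L(T(v))`, `v ∈ V(T)`: a rooted tree on leaf set `V` corresponds
exactly to a family of nonempty, pairwise compatible subsets of `V` containing
all singletons and `V` itself.  Together with a coloring `σ : V → M` this is a
leaf-colored tree. -/
structure PhyloTree (V : Type) where
  clusters : Set (Set V)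
  compat : ∀ p ∈ clusters, ∀ q ∈ clusters, p ⊆ q ∨ q ⊆ p ∨ p ∩ q = ∅
  singleton_mem : ∀ v : V, {v} ∈ clusters
  univ_mem : Set.univ ∈ clusters
  nonempty_mem : ∀ p ∈ clusters, p.Nonempty

namespace PhyloTree

variable {V M : Type}

/-- The cluster `L(T(lca(x,y)))` of the last common ancestor of `x` and `y`;
for inner vertices `u,v` of a tree one has `u ⪯_T v ↔ L(T(u)) ⊆ L(T(v))`. -/
def lcaSet (T : PhyloTree V) (x y : V) : Set V :=
  ⋂₀ {p : Set V | p ∈ T.clusters ∧ x ∈ p ∧ y ∈ p}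

/-- `T` displays the triple `xy|z`, i.e. `lca(x,y) ≺ lca(x,z) = lca(y,z)`. -/
def Displays (T : PhyloTree V) (x y z : V) : Prop :=
  T.lcaSet x y ⊂ T.lcaSet x z ∧ T.lcaSet x z = T.lcaSet y z

/-- `y` is a best match of `x` in the leaf-colored tree `(T,σ)`. -/
def BestMatch (T : PhyloTree V) (σ : V → M) (x y : V) : Prop :=
  σ x ≠ σ y ∧ ∀ y' : V, σ y' = σ y → T.lcaSet x y ⊆ T.lcaSet x y'

end PhyloTree

variable {V M : Type}

/-- `(T,σ)` explains `(G,σ)`, i.e. `(G,σ) = G(T,σ)`. -/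
def Explains (T : PhyloTree V) (σ : V → M) (G : V → V → Prop) : Prop :=
  ∀ x y : V, G x y ↔ T.BestMatch σ x y

/-- `(G,σ)` is a best match graph. -/
def IsBMG (G : V → V → Prop) (σ : V → M) : Prop :=
  ∃ T : PhyloTree V, Explains T σ G

/-- The triple `xy|y'` is informative for `(G,σ)`. -/
def InformativeTriple (G : V → V → Prop) (σ : V → M) (x y y' : V) : Prop :=
  x ≠ y ∧ x ≠ y' ∧ y ≠ y' ∧ σ x ≠ σ y ∧ σ y = σ y' ∧ G x y ∧ ¬ G x y'

/-- The triple `xy|y'` is forbidden for `(G,σ)`. -/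
def ForbiddenTriple (G : V → V → Prop) (σ : V → M) (x y y' : V) : Prop :=
  x ≠ y ∧ x ≠ y' ∧ y ≠ y' ∧ σ x ≠ σ y ∧ σ y = σ y' ∧ G x y ∧ G x y'

/-- `(G,σ)` is sf-colored: `σ` is proper and every vertex has an out-neighbor
of every color present in the graph other than its own. -/
def SfColored (G : V → V → Prop) (σ : V → M) : Prop :=
  (∀ x y : V, G x y → σ x ≠ σ y) ∧
  ∀ (x : V) (s : M), (∃ v : V, σ v = s) → s ≠ σ x → ∃ y : V, σ y = s ∧ G x y

/-- If `(G,σ)` is a BMG explained by `(T,σ)`, then none of the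
forbidden triples of `(G,σ)` is displayed by `(T,σ)`. -/
theorem forbidden_triples_not_displayed [Fintype V]
    (G : V → V → Prop) (σ : V → M) (T : PhyloTree V)
    (hT : Explains T σ G) :
    ∀ x y y' : V, ForbiddenTriple G σ x y y' → ¬ T.Displays x y y' := by
  rintro x y y' ⟨_, _, _, _, hσ, _, hxy'⟩ ⟨hsub, _⟩
  have hbm := (hT x y').mp hxy'
  exact hsub.not_subset (hbm.2 y hσ)
end

section
/- Let (G,σ) be an sf-colored digraph with vertex set L. Then for every leaf-colored tree (T,σ) on leaf set L that displays all informative triples of (G,σ), the arc set of the best match graph G(T,σ) is a subset of the arc set of G. -/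
variable {V M : Type}

/-- If `(G,σ)` is sf-colored and `(T,σ)` displays all informative
triples of `(G,σ)`, then every arc of `G(T,σ)` (best match) is an arc of `G`. -/
theorem bmg_of_tree_subgraph [Fintype V]
    (G : V → V → Prop) (σ : V → M) (hsf : SfColored G σ)
    (T : PhyloTree V)
    (hdisp : ∀ x y y' : V, InformativeTriple G σ x y y' → T.Displays x y y') :
    ∀ x y : V, T.BestMatch σ x y → G x y := by
  intro x y ⟨hne, hbm⟩
  by_contra hxy
  obtain ⟨y'', hc, hG⟩ := hsf.2 x (σ y) ⟨y, rfl⟩ (Ne.symm hne)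
  have hxy'' : x ≠ y'' := fun h => hsf.1 x y'' hG (h ▸ rfl)
  have hxyne : x ≠ y := fun h => hne (h ▸ rfl)
  have hyy : y'' ≠ y := fun h => hxy (h ▸ hG)
  have hinf : InformativeTriple G σ x y'' y :=
    ⟨hxy'', hxyne, hyy, fun h => hne (h.trans hc), hc, hG, hxy⟩
  have hd := hdisp x y'' y hinf
  exact hd.1.not_subset (hbm y'' hc)
end

section
/- Let (G,σ) be an sf-colored digraph with vertex set L. A leaf-colored tree (T,σ) on leaf set L explains (G,σ) if and only if (T,σ) displays all informative triples of (G,σ) and none of the forbidden triples of (G,σ). In this case, (G,σ) is a best match graph. -/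
variable {V M : Type}

section Aux

variable {V M : Type}

/-- Two clusters sharing a point are comparable. -/
lemma cluster_comparable (T : PhyloTree V) {p q : Set V}
    (hp : p ∈ T.clusters) (hq : q ∈ T.clusters) {x : V} (hxp : x ∈ p) (hxq : x ∈ q) :
    p ⊆ q ∨ q ⊆ p := by
  rcases T.compat p hp q hq with h | h | h
  · exact Or.inl h
  · exact Or.inr h
  · exact absurd (Set.mem_inter hxp hxq) (by simp [h])

lemma lcaSet_spec [Fintype V] (T : PhyloTree V) (x y : V) :
    T.lcaSet x y ∈ T.clusters ∧ x ∈ T.lcaSet x y ∧ y ∈ T.lcaSet x y := by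
  classical
  set S : Set (Set V) := {p : Set V | p ∈ T.clusters ∧ x ∈ p ∧ y ∈ p} with hS
  have hfin : S.Finite := Set.toFinite S
  have hne : S.Nonempty := ⟨Set.univ, T.univ_mem, Set.mem_univ x, Set.mem_univ y⟩
  obtain ⟨p, hpS, hmin0⟩ := Set.Finite.exists_minimalFor id S hfin hne
  have hmin : ∀ q ∈ S, q ⊆ p → p = q := fun q hq h => subset_antisymm (hmin0 (j := q) hq h) h
  have hple : ∀ q ∈ S, p ⊆ q := by
    intro q hqS
    rcases cluster_comparable T hpS.1 hqS.1 hpS.2.1 hqS.2.1 with h | h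
    · exact h
    · exact le_of_eq (hmin q hqS h)
  have : T.lcaSet x y = p := by
    apply subset_antisymm
    · exact Set.sInter_subset_of_mem hpS
    · exact Set.subset_sInter hple
  rw [this]
  exact hpS

lemma lcaSet_mem [Fintype V] (T : PhyloTree V) (x y : V) :
    T.lcaSet x y ∈ T.clusters := (lcaSet_spec T x y).1

lemma left_mem_lcaSet [Fintype V] (T : PhyloTree V) (x y : V) :
    x ∈ T.lcaSet x y := (lcaSet_spec T x y).2.1

lemma right_mem_lcaSet [Fintype V] (T : PhyloTree V) (x y : V) :
    y ∈ T.lcaSet x y := (lcaSet_spec T x y).2.2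

lemma lcaSet_subset (T : PhyloTree V) {p : Set V} (hp : p ∈ T.clusters)
    {x y : V} (hx : x ∈ p) (hy : y ∈ p) : T.lcaSet x y ⊆ p :=
  Set.sInter_subset_of_mem ⟨hp, hx, hy⟩

lemma lcaSet_comparable [Fintype V] (T : PhyloTree V) (x y z : V) :
    T.lcaSet x y ⊆ T.lcaSet x z ∨ T.lcaSet x z ⊆ T.lcaSet x y :=
  cluster_comparable T (lcaSet_mem T x y) (lcaSet_mem T x z)
    (left_mem_lcaSet T x y) (left_mem_lcaSet T x z)

/-- Key lemma: strict containment of lca clusters forces `lca(x,y') = lca(y,y')`. -/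
lemma lcaSet_eq_of_ssubset [Fintype V] (T : PhyloTree V) {x y y' : V}
    (h : T.lcaSet x y ⊂ T.lcaSet x y') : T.lcaSet x y' = T.lcaSet y y' := by
  have hy : y ∈ T.lcaSet x y' := h.1 (right_mem_lcaSet T x y)
  have h1 : T.lcaSet y y' ⊆ T.lcaSet x y' :=
    lcaSet_subset T (lcaSet_mem T x y') hy (right_mem_lcaSet T x y')
  have hx : x ∈ T.lcaSet y y' := by
    rcases cluster_comparable T (lcaSet_mem T y y') (lcaSet_mem T x y)
        (left_mem_lcaSet T y y') (right_mem_lcaSet T x y) with hc | hc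
    · exfalso
      have hy' : y' ∈ T.lcaSet x y := hc (right_mem_lcaSet T y y')
      exact h.2 (lcaSet_subset T (lcaSet_mem T x y) (left_mem_lcaSet T x y) hy')
    · exact hc (left_mem_lcaSet T x y)
  exact subset_antisymm
    (lcaSet_subset T (lcaSet_mem T y y') hx (right_mem_lcaSet T y y')) h1

end Aux

/-- For sf-colored `(G,σ)`, a tree `(T,σ)` on the vertex set
explains `(G,σ)` iff it displays all informative and none of the forbidden
triples of `(G,σ)`; in this case `(G,σ)` is a BMG. -/


theorem explains_iff_agrees [Fintype V]
    (G : V → V → Prop) (σ : V → M) (hsf : SfColored G σ)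
    (T : PhyloTree V) :
    (Explains T σ G ↔
      ((∀ x y y' : V, InformativeTriple G σ x y y' → T.Displays x y y') ∧
       (∀ x y y' : V, ForbiddenTriple G σ x y y' → ¬ T.Displays x y y'))) ∧
    (((∀ x y y' : V, InformativeTriple G σ x y y' → T.Displays x y y') ∧
      (∀ x y y' : V, ForbiddenTriple G σ x y y' → ¬ T.Displays x y y')) →
        IsBMG G σ) := by
  have main : Explains T σ G ↔
      ((∀ x y y' : V, InformativeTriple G σ x y y' → T.Displays x y y') ∧
       (∀ x y y' : V, ForbiddenTriple G σ x y y' → ¬ T.Displays x y y')) := by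
    constructor
    · intro hE
      constructor
      · rintro x y y' ⟨-, -, -, -, hcol, hxy, hxy'⟩
        obtain ⟨hc, hb⟩ := (hE x y).mp hxy
        have hsub : T.lcaSet x y ⊆ T.lcaSet x y' := hb y' hcol.symm
        have hss : T.lcaSet x y ⊂ T.lcaSet x y' := by
          refine ⟨hsub, fun hrev => hxy' ?_⟩
          refine (hE x y').mpr ⟨hcol ▸ hc, fun y'' hy'' => ?_⟩
          exact (subset_antisymm hsub hrev) ▸ hb y'' (hy''.trans hcol.symm)
        exact ⟨hss, lcaSet_eq_of_ssubset T hss⟩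
      · rintro x y y' ⟨-, -, -, -, hcol, hxy, hxy'⟩ ⟨hss, -⟩
        obtain ⟨-, hb⟩ := (hE x y).mp hxy
        obtain ⟨-, hb'⟩ := (hE x y').mp hxy'
        exact hss.2 (hb' y hcol)
    · rintro ⟨hI, hF⟩ x y
      constructor
      · intro hxy
        have hc : σ x ≠ σ y := hsf.1 x y hxy
        refine ⟨hc, fun y' hy' => ?_⟩
        by_cases hyy' : y' = y
        · subst hyy'; exact subset_rfl
        have hxney : x ≠ y := fun h => hc (h ▸ rfl)
        have hxney' : x ≠ y' := fun h => hc (h ▸ hy')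
        by_cases hG' : G x y'
        · rcases lcaSet_comparable T x y y' with h | h
          · exact h
          · rcases eq_or_lt_of_le (α := Set V) h with heq | hlt
            · exact le_of_eq heq.symm
            · exfalso
              refine hF x y' y ⟨hxney', hxney, hyy', fun h => hc (h.trans hy'), hy', hG', hxy⟩
                ⟨hlt, lcaSet_eq_of_ssubset T hlt⟩
        · have := hI x y y' ⟨hxney, hxney', fun h => hyy' h.symm, hc, hy'.symm, hxy, hG'⟩
          exact this.1.1
      · rintro ⟨hc, hb⟩
        by_contra hG
        obtain ⟨y'', hy''c, hy''G⟩ := hsf.2 x (σ y) ⟨y, rfl⟩ (Ne.symm hc)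
        have hne : y'' ≠ y := fun h => hG (h ▸ hy''G)
        have hxy'' : x ≠ y'' := fun h => hc (hy''c ▸ h ▸ rfl)
        have hxney : x ≠ y := fun h => hc (h ▸ rfl)
        have hdisp := hI x y'' y ⟨hxy'', hxney, hne, hy''c ▸ hc, hy''c, hy''G, hG⟩
        exact hdisp.1.2 (hb y'' hy''c)
  exact ⟨main, fun h => ⟨T, main.mpr h⟩⟩
end

section
/- A vertex-colored digraph (G,σ) is a best match graph if and only if (i) (G,σ) is sf-colored and (ii) there exists a leaf-colored tree on the vertex set of G that displays every informative triple of (G,σ) and none of the forbidden triples of (G,σ). -/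
variable {V M : Type}

namespace PhyloTree

/-- Two clusters with nonempty intersection are comparable. -/
lemma clusters_comparable (T : PhyloTree V) {p q : Set V}
    (hp : p ∈ T.clusters) (hq : q ∈ T.clusters) (h : (p ∩ q).Nonempty) :
    p ⊆ q ∨ q ⊆ p := by
  rcases T.compat p hp q hq with h1 | h1 | h1
  · exact Or.inl h1
  · exact Or.inr h1
  · rw [h1] at h; exact absurd h (by simp)

/-- For finite `V`, the lca-set is itself a cluster containing `x` and `y`. -/
lemma lcaSet_spec [Fintype V] (T : PhyloTree V) (x y : V) :
    T.lcaSet x y ∈ T.clusters ∧ x ∈ T.lcaSet x y ∧ y ∈ T.lcaSet x y := by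
  set S : Set (Set V) := {p : Set V | p ∈ T.clusters ∧ x ∈ p ∧ y ∈ p} with hS
  have hne : S.Nonempty := ⟨Set.univ, T.univ_mem, Set.mem_univ x, Set.mem_univ y⟩
  have hfin : S.Finite := Set.toFinite S
  obtain ⟨p, hp, hmin⟩ : ∃ p ∈ S, ∀ q ∈ S, id q ≤ id p → id p = id q := by
    obtain ⟨p, hp, hm⟩ := hfin.exists_minimalFor id S hne
    exact ⟨p, hp, fun q hq h => le_antisymm (hm hq h) h⟩
  have hleast : ∀ q ∈ S, p ⊆ q := by
    intro q hq
    rcases T.clusters_comparable hp.1 hq.1 ⟨x, hp.2.1, hq.2.1⟩ with h1 | h1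
    · exact h1
    · exact le_of_eq (id (hmin q hq h1) : p = q)
  have heq : T.lcaSet x y = p := by
    apply Set.Subset.antisymm
    · exact Set.sInter_subset_of_mem hp
    · exact Set.subset_sInter (fun q hq => hleast q hq)
  rw [heq]
  exact hp

lemma lcaSet_subset [Fintype V] (T : PhyloTree V) {x y : V} {p : Set V}
    (hp : p ∈ T.clusters) (hx : x ∈ p) (hy : y ∈ p) : T.lcaSet x y ⊆ p :=
  Set.sInter_subset_of_mem ⟨hp, hx, hy⟩

/-- Two lca-sets based at the same vertex `x` are comparable. -/
lemma lcaSet_comparable [Fintype V] (T : PhyloTree V) (x y z : V) :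
    T.lcaSet x y ⊆ T.lcaSet x z ∨ T.lcaSet x z ⊆ T.lcaSet x y := by
  obtain ⟨h1, hx1, _⟩ := T.lcaSet_spec x y
  obtain ⟨h2, hx2, _⟩ := T.lcaSet_spec x z
  exact T.clusters_comparable h1 h2 ⟨x, hx1, hx2⟩

/-- A strict inclusion of lca-sets at `x` yields a displayed triple. -/
lemma displays_of_ssubset [Fintype V] (T : PhyloTree V) {x y y' : V}
    (h : T.lcaSet x y ⊂ T.lcaSet x y') : T.Displays x y y' := by
  obtain ⟨hcy, hxy, hyy⟩ := T.lcaSet_spec x y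
  obtain ⟨hcy', hxy', hy'y'⟩ := T.lcaSet_spec x y'
  obtain ⟨hcz, hyz, hy'z⟩ := T.lcaSet_spec y y'
  refine ⟨h, Set.Subset.antisymm ?_ ?_⟩
  · -- lcaSet x y' ⊆ lcaSet y y' : enough that x ∈ lcaSet y y'
    have hcomp : T.lcaSet y y' ⊆ T.lcaSet x y ∨ T.lcaSet x y ⊆ T.lcaSet y y' :=
      T.clusters_comparable hcz hcy ⟨y, hyz, hyy⟩
    rcases hcomp with h1 | h1
    · -- then y' ∈ lcaSet x y, so lcaSet x y' ⊆ lcaSet x y, contradicting ⊂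
      exact absurd (T.lcaSet_subset hcy hxy (h1 hy'z)) h.2
    · exact T.lcaSet_subset hcz (h1 hxy) hy'z
  · exact T.lcaSet_subset hcy' (h.1 hyy) hy'y'

end PhyloTree

/-- `(G,σ)` is a BMG iff it is sf-colored and there is a tree on
its vertex set displaying all informative and none of the forbidden triples. -/
theorem isBMG_iff_sfColored_and_compatible [Fintype V]
    (G : V → V → Prop) (σ : V → M) :
    IsBMG G σ ↔
      (SfColored G σ ∧
        ∃ T : PhyloTree V,
          (∀ x y y' : V, InformativeTriple G σ x y y' → T.Displays x y y') ∧
          (∀ x y y' : V, ForbiddenTriple G σ x y y' → ¬ T.Displays x y y')) := by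
  constructor
  · rintro ⟨T, hT⟩
    constructor
    · constructor
      · intro x y hxy
        exact ((hT x y).mp hxy).1
      · intro x s ⟨v, hv⟩ hs
        -- pick y with σ y = s minimizing lcaSet x y
        set S : Set V := {y : V | σ y = s} with hS
        have hne : S.Nonempty := ⟨v, hv⟩
        obtain ⟨y, hy, hmin⟩ : ∃ y ∈ S, ∀ q ∈ S, T.lcaSet x q ≤ T.lcaSet x y →
            T.lcaSet x y = T.lcaSet x q := by
          obtain ⟨y, hy, hm⟩ :=
            (Set.toFinite S).exists_minimalFor (fun y => T.lcaSet x y) S hne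
          exact ⟨y, hy, fun q hq h => le_antisymm (hm hq h) h⟩
        have hys : σ y = s := hy
        refine ⟨y, hys, (hT x y).mpr ⟨fun h => hs (h.trans hys).symm, ?_⟩⟩
        intro y' hy'
        have hy'S : y' ∈ S := show σ y' = s from hy'.trans hys
        rcases T.lcaSet_comparable x y y' with h1 | h1
        · exact h1
        · exact le_of_eq (hmin y' hy'S h1)
    · refine ⟨T, ?_, ?_⟩
      · rintro x y y' ⟨_, _, _, hcxy, hcyy', hGxy, hGxy'⟩
        have hbm := (hT x y).mp hGxy
        have h1 : T.lcaSet x y ⊆ T.lcaSet x y' := hbm.2 y' hcyy'.symm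
        have hnbm : ¬ T.BestMatch σ x y' := fun h => hGxy' ((hT x y').mpr h)
        have hcxy' : σ x ≠ σ y' := hcyy' ▸ hcxy
        rw [PhyloTree.BestMatch] at hnbm
        push_neg at hnbm
        obtain ⟨y'', hy'', hnsub⟩ := hnbm hcxy'
        have h2 : T.lcaSet x y ⊆ T.lcaSet x y'' := hbm.2 y'' (hy''.trans hcyy'.symm)
        have hne : T.lcaSet x y ≠ T.lcaSet x y' := fun h => hnsub (h ▸ h2)
        exact T.displays_of_ssubset ⟨h1, fun h => hne (Set.Subset.antisymm h1 h)⟩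
      · rintro x y y' ⟨_, _, _, _, hcyy', hGxy, hGxy'⟩ hdisp
        have h1 := ((hT x y).mp hGxy).2 y' hcyy'.symm
        have h2 := ((hT x y').mp hGxy').2 y hcyy'
        exact hdisp.1.2 h2
  · rintro ⟨⟨hproper, hsf⟩, T, hinf, hforb⟩
    refine ⟨T, fun x y => ?_⟩
    constructor
    · intro hGxy
      have hc := hproper x y hGxy
      refine ⟨hc, fun y' hy' => ?_⟩
      by_cases hyy' : y = y'
      · subst hyy'; exact subset_rfl
      have hxy : x ≠ y := fun h => hc (h ▸ rfl)
      have hxy' : x ≠ y' := fun h => (hy' ▸ hc : σ x ≠ σ y') (h ▸ rfl)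
      by_cases hGxy' : G x y'
      · -- forbidden triples both ways, so lca-sets are equal
        have hf1 : ForbiddenTriple G σ x y y' :=
          ⟨hxy, hxy', hyy', hc, hy'.symm, hGxy, hGxy'⟩
        have hf2 : ForbiddenTriple G σ x y' y :=
          ⟨hxy', hxy, Ne.symm hyy', hy' ▸ hc, hy', hGxy', hGxy⟩
        have h1 := hforb x y y' hf1
        have h2 := hforb x y' y hf2
        rcases T.lcaSet_comparable x y y' with hle | hle
        · exact hle
        · rcases eq_or_ne (T.lcaSet x y') (T.lcaSet x y) with he | hne
          · exact he ▸ subset_rfl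
          · exact absurd (T.displays_of_ssubset ⟨hle, fun h =>
              hne (Set.Subset.antisymm hle h)⟩) h2
      · have hi : InformativeTriple G σ x y y' :=
          ⟨hxy, hxy', hyy', hc, hy'.symm, hGxy, hGxy'⟩
        exact (hinf x y y' hi).1.1
    · rintro ⟨hc, hbm⟩
      obtain ⟨y'', hy'', hGxy''⟩ := hsf x (σ y) ⟨y, rfl⟩ (Ne.symm hc)
      by_cases hyy'' : y'' = y
      · exact hyy'' ▸ hGxy''
      by_contra hGxy
      have hxy : x ≠ y := fun h => hc (h ▸ rfl)
      have hxy'' : x ≠ y'' := fun h => hc (hy'' ▸ h ▸ rfl)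
      have hi : InformativeTriple G σ x y'' y :=
        ⟨hxy'', hxy, hyy'', fun h => hc (h.trans hy''), hy'', hGxy'', hGxy⟩
      have hd := hinf x y'' y hi
      exact hd.1.2 (hbm y'' hy'')
end

section
/- Let (G,σ) be an sf-colored digraph with nonempty vertex set, and let L' be the union of the leaf sets of all informative and forbidden triples of (G,σ). Then the following three statements are equivalent: (1) L' = V(G); (2) the union of the sets of informative and forbidden triples of (G,σ) is nonempty; (3) (G,σ) uses at least two colors and contains two vertices of the same color. -/
variable {V M : Type}

lemma key_triple (G : V → V → Prop) (σ : V → M) (hsf : SfColored G σ)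
    (x w v : V) (hxw : σ x ≠ σ w) (hvw : v ≠ w) (hσ : σ v = σ w) :
    ∃ b c : V, (InformativeTriple G σ x b c ∨ ForbiddenTriple G σ x b c) ∧
      (w = b ∨ w = c) := by
  obtain ⟨y, hyc, hGxy⟩ := hsf.2 x (σ w) ⟨w, rfl⟩ (Ne.symm hxw)
  have hxy : σ x ≠ σ y := by rw [hyc]; exact hxw
  by_cases hyw : y = w
  · -- y = w : use triple x w v
    subst hyw
    have hxv : σ x ≠ σ v := by rw [hσ]; exact hxy
    refine ⟨y, v, ?_, Or.inl rfl⟩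
    have base : x ≠ y ∧ x ≠ v ∧ y ≠ v ∧ σ x ≠ σ y ∧ σ y = σ v ∧ G x y :=
      ⟨fun h => hxy (congrArg σ h), fun h => hxv (congrArg σ h),
        fun h => hvw (h.symm), hxy, hσ.symm, hGxy⟩
    by_cases h : G x v
    · exact Or.inr ⟨base.1, base.2.1, base.2.2.1, base.2.2.2.1, base.2.2.2.2.1,
        base.2.2.2.2.2, h⟩
    · exact Or.inl ⟨base.1, base.2.1, base.2.2.1, base.2.2.2.1, base.2.2.2.2.1,
        base.2.2.2.2.2, h⟩
  · -- y ≠ w : use triple x y w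
    refine ⟨y, w, ?_, Or.inr rfl⟩
    have base : x ≠ y ∧ x ≠ w ∧ y ≠ w ∧ σ x ≠ σ y ∧ σ y = σ w ∧ G x y :=
      ⟨fun h => hxy (congrArg σ h), fun h => hxw (congrArg σ h), hyw, hxy, hyc, hGxy⟩
    by_cases h : G x w
    · exact Or.inr ⟨base.1, base.2.1, base.2.2.1, base.2.2.2.1, base.2.2.2.2.1,
        base.2.2.2.2.2, h⟩
    · exact Or.inl ⟨base.1, base.2.1, base.2.2.1, base.2.2.2.1, base.2.2.2.2.1,
        base.2.2.2.2.2, h⟩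

/-- For sf-colored `(G,σ)` with nonempty vertex set, the
following are equivalent: (1) every vertex occurs in some informative or
forbidden triple; (2) some informative or forbidden triple exists;
(3) at least two colors are used and two vertices share a color. -/
theorem triple_leaves_cover_iff [Fintype V] [Nonempty V]
    (G : V → V → Prop) (σ : V → M) (hsf : SfColored G σ) :
    ((∀ v : V, ∃ x y y' : V,
        (InformativeTriple G σ x y y' ∨ ForbiddenTriple G σ x y y') ∧
        (v = x ∨ v = y ∨ v = y')) ↔
      (∃ x y y' : V, InformativeTriple G σ x y y' ∨ ForbiddenTriple G σ x y y')) ∧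
    ((∃ x y y' : V, InformativeTriple G σ x y y' ∨ ForbiddenTriple G σ x y y') ↔
      ((∃ u v : V, σ u ≠ σ v) ∧ (∃ u v : V, u ≠ v ∧ σ u = σ v))) := by
  classical
  -- (2) → (3)
  have h23 : (∃ x y y' : V, InformativeTriple G σ x y y' ∨ ForbiddenTriple G σ x y y') →
      ((∃ u v : V, σ u ≠ σ v) ∧ (∃ u v : V, u ≠ v ∧ σ u = σ v)) := by
    rintro ⟨x, y, y', h | h⟩
    · exact ⟨⟨x, y, h.2.2.2.1⟩, ⟨y, y', h.2.2.1, h.2.2.2.2.1⟩⟩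
    · exact ⟨⟨x, y, h.2.2.2.1⟩, ⟨y, y', h.2.2.1, h.2.2.2.2.1⟩⟩
  -- (3) → (1)
  have h31 : ((∃ u v : V, σ u ≠ σ v) ∧ (∃ u v : V, u ≠ v ∧ σ u = σ v)) →
      (∀ w : V, ∃ x y y' : V,
        (InformativeTriple G σ x y y' ∨ ForbiddenTriple G σ x y y') ∧
        (w = x ∨ w = y ∨ w = y')) := by
    rintro ⟨⟨a, b, hab⟩, ⟨u, v, huv, hσuv⟩⟩ w
    by_cases hpart : ∃ p : V, p ≠ w ∧ σ p = σ w
    · -- w has a same-colored partner; pick x with σ x ≠ σ w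
      obtain ⟨p, hpw, hpσ⟩ := hpart
      have : ∃ x : V, σ x ≠ σ w := by
        by_cases h : σ a = σ w
        · exact ⟨b, fun hb => hab (h.trans hb.symm)⟩
        · exact ⟨a, h⟩
      obtain ⟨x, hxw⟩ := this
      obtain ⟨c, d, ht, hw⟩ := key_triple G σ hsf x w p hxw hpw hpσ
      exact ⟨x, c, d, ht, Or.inr hw⟩
    · -- w is unique in its color; then σ w ≠ σ u, use w as x
      push_neg at hpart
      have hwu : σ w ≠ σ u := by
        intro h
        rcases eq_or_ne u w with rfl | hne
        · exact hpart v (fun hv => huv hv.symm) hσuv.symm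
        · exact hpart u hne h.symm
      obtain ⟨c, d, ht, _⟩ :=
        key_triple G σ hsf w u v hwu (fun h => huv h.symm) hσuv.symm
      exact ⟨w, c, d, ht, Or.inl rfl⟩
  refine ⟨⟨fun h1 => h1 (Classical.arbitrary V) |>.imp
      (fun x ⟨y, y', ht, _⟩ => ⟨y, y', ht⟩), fun h2 => h31 (h23 h2)⟩, ?_⟩
  refine ⟨h23, fun h3 => ?_⟩
  obtain ⟨x, y, y', ht, _⟩ := h31 h3 (Classical.arbitrary V)
  exact ⟨x, y, y', ht⟩
end

section
/- Let (G,σ) be an sf-colored digraph with nonempty vertex set that has no informative triple and no forbidden triple. Then (G,σ) is a best match graph, and it is explained by every leaf-colored tree on the vertex set V(G) with coloring σ. -/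
variable {V M : Type}

/-- An sf-colored graph with nonempty vertex set having no
informative and no forbidden triple is a BMG that is explained by every
leaf-colored tree on its vertex set. -/
theorem bmg_of_no_triples [Fintype V] [Nonempty V]
    (G : V → V → Prop) (σ : V → M) (hsf : SfColored G σ)
    (hnoInf : ∀ x y y' : V, ¬ InformativeTriple G σ x y y')
    (hnoForb : ∀ x y y' : V, ¬ ForbiddenTriple G σ x y y') :
    IsBMG G σ ∧ ∀ T : PhyloTree V, Explains T σ G := by
  -- Key lemma: if `G x y` then `y` is the unique vertex of its color.
  have key : ∀ x y y' : V, σ x ≠ σ y → σ y' = σ y → G x y → y' = y := by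
    intro x y y' hxy hy' hG
    by_contra hne
    have hxy' : σ x ≠ σ y' := fun h => hxy (h.trans hy')
    have hxney : x ≠ y := fun h => hxy (by rw [h])
    have hxney' : x ≠ y' := fun h => hxy' (by rw [h])
    by_cases hG' : G x y'
    · exact hnoForb x y y' ⟨hxney, hxney', Ne.symm hne, hxy, hy'.symm, hG, hG'⟩
    · exact hnoInf x y y' ⟨hxney, hxney', Ne.symm hne, hxy, hy'.symm, hG, hG'⟩
  have expl : ∀ T : PhyloTree V, Explains T σ G := by
    intro T x y
    constructor
    · intro hG
      have hne := hsf.1 x y hG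
      refine ⟨hne, fun y' hy' => ?_⟩
      rw [key x y y' hne hy' hG]
    · rintro ⟨hne, -⟩
      obtain ⟨y', hy', hG'⟩ := hsf.2 x (σ y) ⟨y, rfl⟩ (Ne.symm hne)
      have : y = y' := key x y' y (fun h => hne (h.trans hy')) hy'.symm hG'
      rwa [this]
  refine ⟨⟨⟨{p | (∃ v : V, p = {v}) ∨ p = Set.univ}, ?_, fun v => Or.inl ⟨v, rfl⟩,
      Or.inr rfl, ?_⟩, expl _⟩, expl⟩
  · rintro p (⟨v, rfl⟩ | rfl) q hq
    · rcases hq with ⟨w, rfl⟩ | rfl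
      · by_cases h : v = w
        · exact Or.inl (by rw [h])
        · refine Or.inr (Or.inr ?_)
          ext z; simp only [Set.mem_inter_iff, Set.mem_singleton_iff, Set.mem_empty_iff_false,
            iff_false, not_and]
          rintro rfl rfl; exact h rfl
      · exact Or.inl (Set.subset_univ _)
    · exact Or.inr (Or.inl (Set.subset_univ _))
  · rintro p (⟨v, rfl⟩ | rfl)
    · exact ⟨v, rfl⟩
    · exact Set.univ_nonempty
end

section
/- Let (G,σ) be a properly 2-colored digraph that contains no induced F1-graph. Then (G,σ) satisfies condition (N1): for any two thinness classes α and β with α∩N(β)=β∩N(α)=∅, it holds that N(α)∩N(N(β)) = N(β)∩N(N(α)) = ∅. -/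
variable {V M : Type}

/-- Out-neighborhood `N(x)`. -/
def outN (G : V → V → Prop) (x : V) : Set V := {y | G x y}

/-- In-neighborhood `N⁻(x)`. -/
def inN (G : V → V → Prop) (x : V) : Set V := {y | G y x}

/-- Out-neighborhood of a set of vertices. -/
def outNS (G : V → V → Prop) (A : Set V) : Set V := {y | ∃ x ∈ A, G x y}

/-- The thinness class of the vertex `a`: all vertices with the same out- and
in-neighborhood as `a`. -/
def thinClass (G : V → V → Prop) (a : V) : Set V :=
  {v | outN G v = outN G a ∧ inN G v = inN G a}

/-- `(G,σ)` contains an induced F1-graph. -/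
def HasF1 (G : V → V → Prop) (σ : V → M) : Prop :=
  ∃ x1 x2 y1 y2 : V,
    x1 ≠ x2 ∧ y1 ≠ y2 ∧
    σ x1 = σ x2 ∧ σ y1 = σ y2 ∧ σ x1 ≠ σ y1 ∧
    ¬ G x1 x2 ∧ ¬ G x2 x1 ∧ ¬ G y1 y2 ∧ ¬ G y2 y1 ∧
    G x1 y1 ∧ G y2 x2 ∧ G y1 x2 ∧ ¬ G x1 y2 ∧ ¬ G y2 x1

/-- `(G,σ)` contains an induced F2-graph. -/
def HasF2 (G : V → V → Prop) (σ : V → M) : Prop :=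
  ∃ x1 x2 y1 y2 : V,
    x1 ≠ x2 ∧ y1 ≠ y2 ∧
    σ x1 = σ x2 ∧ σ y1 = σ y2 ∧ σ x1 ≠ σ y1 ∧
    ¬ G x1 x2 ∧ ¬ G x2 x1 ∧ ¬ G y1 y2 ∧ ¬ G y2 y1 ∧
    G x1 y1 ∧ G y1 x2 ∧ G x2 y2 ∧ ¬ G x1 y2

/-- `(G,σ)` contains an induced F3-graph. -/
def HasF3 (G : V → V → Prop) (σ : V → M) : Prop :=
  ∃ x1 x2 y1 y2 y3 : V,
    x1 ≠ x2 ∧ y1 ≠ y2 ∧ y1 ≠ y3 ∧ y2 ≠ y3 ∧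
    σ x1 = σ x2 ∧ σ y1 = σ y2 ∧ σ y2 = σ y3 ∧ σ x1 ≠ σ y1 ∧
    ¬ G x1 x2 ∧ ¬ G x2 x1 ∧ ¬ G y1 y2 ∧ ¬ G y2 y1 ∧
    ¬ G y1 y3 ∧ ¬ G y3 y1 ∧ ¬ G y2 y3 ∧ ¬ G y3 y2 ∧
    G x1 y1 ∧ G x2 y2 ∧ G x1 y3 ∧ G x2 y3 ∧ ¬ G x1 y2 ∧ ¬ G x2 y1


lemma key_no_F1 (G : V → V → Prop) (σ : V → Bool)
    (hproper : ∀ x y : V, G x y → σ x ≠ σ y)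
    (hF1 : ¬ HasF1 G σ) (a b : V)
    (hab : ¬ G b a) (hba : ¬ G a b) :
    outN G a ∩ outNS G (outN G b) = ∅ := by
  by_contra h
  obtain ⟨z, haz, w, hbw, hwz⟩ := Set.nonempty_iff_ne_empty.mpr h
  apply hF1
  have c1 : σ a ≠ σ z := hproper a z haz
  have c2 : σ w ≠ σ z := hproper w z hwz
  have c3 : σ b ≠ σ w := hproper b w hbw
  have e1 : σ w = σ a := by
    cases hsa : σ a <;> cases hsw : σ w <;> cases hsz : σ z <;> simp_all
  have e2 : σ b = σ z := by
    cases hsb : σ b <;> cases hsw : σ w <;> cases hsz : σ z <;> simp_all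
  refine ⟨b, z, w, a, ?_, ?_, e2, e1, c3, ?_, ?_, ?_, ?_,
    hbw, haz, hwz, hab, hba⟩
  · intro e; subst e; exact hba haz
  · intro e; subst e; exact hab hbw
  · exact fun hc => hproper b z hc e2
  · exact fun hc => hproper z b hc e2.symm
  · exact fun hc => hproper w a hc e1
  · exact fun hc => hproper a w hc e1.symm

/-- A properly 2-colored digraph without induced F1-graph
satisfies (N1). -/
theorem N1_of_no_F1 [Fintype V] (G : V → V → Prop) (σ : V → Bool)
    (hproper : ∀ x y : V, G x y → σ x ≠ σ y)
    (hsurj : Function.Surjective σ)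
    (hF1 : ¬ HasF1 G σ) :
    ∀ a b : V,
      thinClass G a ∩ outN G b = ∅ → thinClass G b ∩ outN G a = ∅ →
      outN G a ∩ outNS G (outN G b) = ∅ ∧ outN G b ∩ outNS G (outN G a) = ∅ := by
  intro a b hab hba
  have h1 : ¬ G b a := fun h => Set.eq_empty_iff_forall_notMem.mp hab a ⟨⟨rfl, rfl⟩, h⟩
  have h2 : ¬ G a b := fun h => Set.eq_empty_iff_forall_notMem.mp hba b ⟨⟨rfl, rfl⟩, h⟩
  exact ⟨key_no_F1 G σ hproper hF1 a b h1 h2, key_no_F1 G σ hproper hF1 b a h2 h1⟩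
end

section
/- Let (G,σ) be a properly 2-colored digraph that contains no induced F2-graph. Then (G,σ) satisfies condition (N2): for every thinness class α, N(N(N(α))) ⊆ N(α). -/
variable {V M : Type}

/-- A properly 2-colored digraph without induced F2-graph
satisfies (N2). -/
theorem N2_of_no_F2 [Fintype V] (G : V → V → Prop) (σ : V → Bool)
    (hproper : ∀ x y : V, G x y → σ x ≠ σ y)
    (hsurj : Function.Surjective σ)
    (hF2 : ¬ HasF2 G σ) :
    ∀ a : V, outNS G (outNS G (outN G a)) ⊆ outN G a := by
  intro a y2 hy2
  obtain ⟨x2, ⟨y1, hy1, h12⟩, h22⟩ := hy2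
  by_contra hna
  have bool_lemma : ∀ b c d : Bool, b ≠ c → d ≠ c → b = d := by decide
  have c1 : σ a ≠ σ y1 := hproper a y1 hy1
  have c2 : σ y1 ≠ σ x2 := hproper y1 x2 h12
  have c3 : σ x2 ≠ σ y2 := hproper x2 y2 h22
  have cax : σ a = σ x2 := bool_lemma _ _ _ c1 (Ne.symm c2)
  have cyy : σ y1 = σ y2 := bool_lemma _ _ _ c2 (Ne.symm c3)
  apply hF2
  refine ⟨a, x2, y1, y2, ?_, ?_, cax, cyy, c1, ?_, ?_, ?_, ?_, hy1, h12, h22, hna⟩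
  · rintro rfl; exact hna h22
  · rintro rfl; exact hna hy1
  · intro h; exact hproper a x2 h cax
  · intro h; exact hproper x2 a h cax.symm
  · intro h; exact hproper y1 y2 h cyy
  · intro h; exact hproper y2 y1 h cyy.symm
end

section
/- Let (G,σ) be a properly 2-colored digraph that contains neither an induced F1-graph nor an induced F3-graph. Then (G,σ) satisfies condition (N3): for any two thinness classes α and β with α∩N(N(β))=β∩N(N(α))=∅ and N(α)∩N(β)≠∅, it holds that N⁻(α)=N⁻(β), and N(α)⊆N(β) or N(β)⊆N(α). -/
variable {V M : Type}

lemma bool_eq_of_ne (p q r : Bool) (h1 : p ≠ r) (h2 : q ≠ r) : p = q := by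
  cases p <;> cases q <;> cases r <;> simp_all

/-- A properly 2-colored digraph without induced F1- and
F3-graphs satisfies (N3). -/
theorem N3_of_no_F1_F3 [Fintype V] (G : V → V → Prop) (σ : V → Bool)
    (hproper : ∀ x y : V, G x y → σ x ≠ σ y)
    (hsurj : Function.Surjective σ)
    (hF1 : ¬ HasF1 G σ) (hF3 : ¬ HasF3 G σ) :
    ∀ a b : V,
      thinClass G a ∩ outNS G (outN G b) = ∅ →
      thinClass G b ∩ outNS G (outN G a) = ∅ →
      (outN G a ∩ outN G b).Nonempty →
      inN G a = inN G b ∧ (outN G a ⊆ outN G b ∨ outN G b ⊆ outN G a) := by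
  intro a b h1 h2 hne
  obtain ⟨w, haw, hbw⟩ := hne
  by_cases hab : a = b
  · subst hab; exact ⟨rfl, Or.inl (subset_refl _)⟩
  have key1 : ∀ x, G b x → ¬ G x a := fun x hbx hxa =>
    (Set.eq_empty_iff_forall_notMem.1 h1 a) ⟨⟨rfl, rfl⟩, x, hbx, hxa⟩
  have key2 : ∀ x, G a x → ¬ G x b := fun x hax hxb =>
    (Set.eq_empty_iff_forall_notMem.1 h2 b) ⟨⟨rfl, rfl⟩, x, hax, hxb⟩
  have hwa : ¬ G w a := key1 w hbw
  have hwb : ¬ G w b := key2 w haw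
  have hσab : σ a = σ b := bool_eq_of_ne _ _ _ (hproper a w haw) (hproper b w hbw)
  have hGab : ¬ G a b := fun h => hproper a b h hσab
  have hGba : ¬ G b a := fun h => hproper b a h hσab.symm
  have step1 : ∀ z, G z a → G z b := by
    intro z hza
    by_contra hzb
    have hbz : ¬ G b z := fun h => key1 z h hza
    have hσza : σ z ≠ σ a := hproper z a hza
    have hσzw : σ z = σ w := bool_eq_of_ne _ _ _ hσza (fun h => hproper a w haw h.symm)
    have hzw : z ≠ w := fun h => hwa (h ▸ hza)
    exact hF1 ⟨z, w, a, b, hzw, hab, hσzw, hσab, hσza,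
      (fun h => hproper z w h hσzw), (fun h => hproper w z h hσzw.symm),
      hGab, hGba, hza, hbw, haw, hzb, hbz⟩
  have step2 : ∀ z, G z b → G z a := by
    intro z hzb
    by_contra hza
    have haz : ¬ G a z := fun h => key2 z h hzb
    have hσzb : σ z ≠ σ b := hproper z b hzb
    have hσzw : σ z = σ w := bool_eq_of_ne _ _ _ hσzb (fun h => hproper b w hbw h.symm)
    have hzw : z ≠ w := fun h => hwb (h ▸ hzb)
    exact hF1 ⟨z, w, b, a, hzw, (Ne.symm hab), hσzw, hσab.symm,
      hσzb, (fun h => hproper z w h hσzw), (fun h => hproper w z h hσzw.symm),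
      hGba, hGab, hzb, haw, hbw, hza, haz⟩
  refine ⟨Set.ext fun z => ⟨step1 z, step2 z⟩, ?_⟩
  by_contra h
  push_neg at h
  obtain ⟨hns1, hns2⟩ := h
  obtain ⟨u, hau, hbu⟩ := Set.not_subset.1 hns1
  obtain ⟨v, hbv, hav⟩ := Set.not_subset.1 hns2
  have hau : G a u := hau
  have hbu : ¬ G b u := hbu
  have hbv : G b v := hbv
  have hav : ¬ G a v := hav
  have hσuv : σ u = σ v := bool_eq_of_ne _ _ _
    (fun h => hproper a u hau h.symm) (fun h => hproper b v hbv (hσab.symm.trans h.symm))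
  have hσvw : σ v = σ w := bool_eq_of_ne _ _ _
    (fun h => hproper b v hbv h.symm) (fun h => hproper b w hbw h.symm)
  have huv : u ≠ v := fun h => hav (h ▸ hau)
  exact hF3 ⟨a, b, u, v, w, hab, huv, (fun h => hbu (h ▸ hbw)),
    (fun h => hav (h ▸ haw)), hσab, hσuv, hσvw, hproper a u hau,
    hGab, hGba,
    (fun h => hproper u v h hσuv), (fun h => hproper v u h hσuv.symm),
    (fun h => hproper u w h (hσuv.trans hσvw)), (fun h => hproper w u h (hσuv.trans hσvw).symm),
    (fun h => hproper v w h hσvw), (fun h => hproper w v h hσvw.symm),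
    hau, hbv, haw, hbw, hav, hbu⟩
end

section
/- Let (G,σ) be a 2-colored bi-cluster graph with at least two connected components, let 𝔍 be its set of connected components, and fix one component X ∈ 𝔍. Let (G',σ) be obtained from (G,σ) by adding all arcs (x,y) with x ∈ X, y a vertex of a component other than X, and σ(x)≠σ(y). Then (G',σ) is a best match graph. -/
variable {V M : Type}

/-- Weak connectivity in a digraph. -/
def WConn (G : V → V → Prop) : V → V → Prop :=
  Relation.ReflTransGen (fun u v => G u v ∨ G v u)

/-- The (weakly) connected component of `x`. -/
def component (G : V → V → Prop) (x : V) : Set V := {v | WConn G x v}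

/-- `C` is a bi-clique of `(G,σ)`: exactly two colors occur in `C` and, inside
`C`, arcs are exactly the pairs of differently colored vertices. -/
def IsBiClique (G : V → V → Prop) (σ : V → M) (C : Set V) : Prop :=
  (∃ s t : M, s ≠ t ∧ σ '' C = {s, t}) ∧
  ∀ x ∈ C, ∀ y ∈ C, (G x y ↔ σ x ≠ σ y)

/-- `(G,σ)` is a bi-cluster graph: every connected component is a bi-clique. -/
def IsBiclusterGraph (G : V → V → Prop) (σ : V → M) : Prop :=
  ∀ x : V, IsBiClique G σ (component G x)

section Aux

open Relation

lemma wconn_symm {G : V → V → Prop} {u v : V} (h : WConn G u v) : WConn G v u := by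
  induction h with
  | refl => exact ReflTransGen.refl
  | tail _ h2 ih => exact ReflTransGen.head (Or.symm h2) ih

lemma mem_component_self (G : V → V → Prop) (u : V) : u ∈ component G u :=
  ReflTransGen.refl

lemma component_symm {G : V → V → Prop} {u v : V} (h : v ∈ component G u) :
    u ∈ component G v := wconn_symm h

lemma component_trans {G : V → V → Prop} {u v w : V} (h1 : v ∈ component G u)
    (h2 : w ∈ component G v) : w ∈ component G u := ReflTransGen.trans h1 h2

lemma component_eq {G : V → V → Prop} {u v : V} (h : v ∈ component G u) :
    component G u = component G v := by
  ext w
  exact ⟨fun hw => component_trans (component_symm h) hw,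
    fun hw => component_trans h hw⟩

/-- The explaining tree: root cluster `V`, all singletons, and all connected
components other than the one of `x0` as clusters. -/
def compTree (G : V → V → Prop) (x0 : V) : PhyloTree V where
  clusters := {p | p = Set.univ ∨ (∃ v, p = {v}) ∨
    ∃ u, u ∉ component G x0 ∧ p = component G u}
  compat := by
    rintro p hp q hq
    rcases hp with rfl | ⟨v, rfl⟩ | ⟨u, hu, rfl⟩
    · exact Or.inr (Or.inl (Set.subset_univ _))
    · by_cases hvq : v ∈ q
      · exact Or.inl (by simpa using hvq)
      · refine Or.inr (Or.inr ?_)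
        ext w; simp only [Set.mem_inter_iff, Set.mem_singleton_iff]
        constructor
        · rintro ⟨rfl, hw⟩; exact absurd hw hvq
        · intro h; exact h.elim
    · rcases hq with rfl | ⟨v, rfl⟩ | ⟨u', hu', rfl⟩
      · exact Or.inl (Set.subset_univ _)
      · by_cases hvp : v ∈ component G u
        · exact Or.inr (Or.inl (by simpa using hvp))
        · refine Or.inr (Or.inr ?_)
          ext w; simp only [Set.mem_inter_iff, Set.mem_singleton_iff]
          constructor
          · rintro ⟨hw, rfl⟩; exact absurd hw hvp
          · intro h; exact h.elim
      · rcases Set.eq_empty_or_nonempty (component G u ∩ component G u') with he | ⟨w, hw1, hw2⟩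
        · exact Or.inr (Or.inr he)
        · refine Or.inl ?_
          rw [component_eq hw1, component_eq hw2]
  singleton_mem := fun v => Or.inr (Or.inl ⟨v, rfl⟩)
  univ_mem := Or.inl rfl
  nonempty_mem := by
    rintro p (rfl | ⟨v, rfl⟩ | ⟨u, _, rfl⟩)
    · exact ⟨x0, trivial⟩
    · exact ⟨v, rfl⟩
    · exact ⟨u, mem_component_self G u⟩

lemma lca_comp (G : V → V → Prop) (x0 : V) {u w : V}
    (hu : u ∉ component G x0) (hw : w ∈ component G u) (hne : u ≠ w) :
    (compTree G x0).lcaSet u w = component G u := by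
  apply subset_antisymm
  · exact Set.sInter_subset_of_mem ⟨Or.inr (Or.inr ⟨u, hu, rfl⟩), mem_component_self G u, hw⟩
  · intro z hz p hp
    obtain ⟨hpc, hup, hwp⟩ := hp
    rcases hpc with rfl | ⟨v, rfl⟩ | ⟨u', _, rfl⟩
    · trivial
    · simp only [Set.mem_singleton_iff] at hup hwp
      exact absurd (hup.trans hwp.symm) hne
    · rw [← component_eq hup] at hz; exact hz

lemma lca_univ (G : V → V → Prop) (x0 : V) {u w : V} (hne : u ≠ w)
    (h : u ∈ component G x0 ∨ w ∉ component G u) :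
    (compTree G x0).lcaSet u w = Set.univ := by
  apply subset_antisymm (Set.subset_univ _)
  intro z _ p hp
  obtain ⟨hpc, hup, hwp⟩ := hp
  rcases hpc with rfl | ⟨v, rfl⟩ | ⟨u', hu', rfl⟩
  · trivial
  · simp only [Set.mem_singleton_iff] at hup hwp
    exact absurd (hup.trans hwp.symm) hne
  · exfalso
    have he : component G u' = component G u := component_eq hup
    rcases h with hX | hwn
    · have : u' ∈ component G x0 := by
        rw [component_eq hX, ← he]; exact mem_component_self G u'
      exact hu' this
    · exact hwn (he ▸ hwp)

end Aux

/-- Adding to a 2-colored bi-cluster graph with at least two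
connected components all arcs from one fixed component `X` (the component of
`x0`) to all differently colored vertices of the other components yields a
BMG. -/
theorem bicluster_plus_component_arcs_isBMG [Fintype V]
    (G : V → V → Prop) (σ : V → Bool)
    (hsurj : Function.Surjective σ)
    (hbc : IsBiclusterGraph G σ)
    (x0 : V) (htwo : ∃ v : V, v ∉ component G x0) :
    IsBMG
      (fun u v => G u v ∨
        (u ∈ component G x0 ∧ v ∉ component G x0 ∧ σ u ≠ σ v)) σ := by
  classical
  refine ⟨compTree G x0, ?_⟩
  -- every component contains both colors
  have hcolors : ∀ (u : V) (b : Bool), ∃ y' ∈ component G u, σ y' = b := by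
    intro u b
    obtain ⟨⟨s, t, hst, himg⟩, _⟩ := hbc u
    have hb : b ∈ ({s, t} : Set Bool) := by
      rcases Bool.eq_false_or_eq_true b with rfl | rfl <;>
        rcases Bool.eq_false_or_eq_true s with rfl | rfl <;>
        rcases Bool.eq_false_or_eq_true t with rfl | rfl <;> simp_all
    rw [← himg] at hb
    obtain ⟨y', hy', hy'b⟩ := hb
    exact ⟨y', hy', hy'b⟩
  -- membership in component of x0 is determined by component equality
  have hXiff : ∀ u : V, u ∈ component G x0 ↔ component G u = component G x0 := by
    intro u
    constructor
    · intro h; exact (component_eq h).symm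
    · intro h; rw [← h]; exact mem_component_self G u
  intro x y
  constructor
  · -- forward direction
    rintro (hxy | ⟨hxX, hyX, hne⟩)
    · have hyc : y ∈ component G x := Relation.ReflTransGen.single (Or.inl hxy)
      have hcol : σ x ≠ σ y :=
        ((hbc x).2 x (mem_component_self G x) y hyc).1 hxy
      have hxyne : x ≠ y := fun h => hcol (h ▸ rfl)
      refine ⟨hcol, fun y' hy' => ?_⟩
      have hy'x : x ≠ y' := fun h => hcol (by rw [← h] at hy'; exact hy')
      by_cases hxX : x ∈ component G x0
      · rw [lca_univ G x0 hy'x (Or.inl hxX)]; exact Set.subset_univ _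
      · rw [lca_comp G x0 hxX hyc hxyne]
        by_cases hy'c : y' ∈ component G x
        · rw [lca_comp G x0 hxX hy'c hy'x]
        · rw [lca_univ G x0 hy'x (Or.inr hy'c)]; exact Set.subset_univ _
    · have hxyne : x ≠ y := fun h => hne (h ▸ rfl)
      refine ⟨hne, fun y' hy' => ?_⟩
      have hy'x : x ≠ y' := fun h => hne (by rw [← h] at hy'; exact hy')
      rw [lca_univ G x0 hy'x (Or.inl hxX)]; exact Set.subset_univ _
  · -- backward direction
    rintro ⟨hcol, hmin⟩
    by_cases hxX : x ∈ component G x0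
    · by_cases hyX : y ∈ component G x0
      · left
        have hyc : y ∈ component G x := by
          rw [(hXiff x).1 hxX]; exact hyX
        exact ((hbc x).2 x (mem_component_self G x) y hyc).2 hcol
      · exact Or.inr ⟨hxX, hyX, hcol⟩
    · left
      have hxyne : x ≠ y := fun h => hcol (h ▸ rfl)
      -- claim: y ∈ component G x
      by_cases hyc : y ∈ component G x
      · exact ((hbc x).2 x (mem_component_self G x) y hyc).2 hcol
      · exfalso
        obtain ⟨y', hy'c, hy'col⟩ := hcolors x (σ y)
        have hy'x : x ≠ y' := fun h => hcol (by rw [← h] at hy'col; exact hy'col)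
        have h1 : (compTree G x0).lcaSet x y = Set.univ :=
          lca_univ G x0 hxyne (Or.inr hyc)
        have h2 : (compTree G x0).lcaSet x y' = component G x :=
          lca_comp G x0 hxX hy'c hy'x
        have hsub := hmin y' hy'col
        rw [h1, h2] at hsub
        -- x0 ∉ component G x
        have hx0 : x0 ∉ component G x := fun h => hxX ((hXiff x).2 (component_eq h))
        exact hx0 (hsub trivial)
end
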